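/- Fix m_n > 0 and define δ(m) = min(1, m_n/m − 1/2) for m > 0. Let m, m′ be reals with 0 < m ≤ m_n, 0 < m′ ≤ m_n, m′ ≠ m, and suppose m_n/m − 1/2 < 1 (i.e., δ(m) < 1). Then: (i) if m′ < m, then m′·(1 + δ(m′))/m − 1 < δ(m); and (ii) if m′ > m, then 1 − m′·(1 − δ(m′))/m < δ(m). -/

import Mathlib

/-- Claim 5 (claim-feasible): at `Φ'` with `δ(m) = min(1, m_n/m - 1/2)`, if
`δ(m) < 1` then `Δ_{i,i'} < δ(m)` for every other option `i'`. -/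
theorem delta_cross_lt_delta (mn : ℝ) (hmn : 0 < mn)
    (m m' : ℝ) (hm : 0 < m) (hm' : 0 < m')
    (hmle : m ≤ mn) (hm'le : m' ≤ mn) (hne : m' ≠ m)
    (hδlt : mn / m - 1 / 2 < 1) :
    let δ := fun t : ℝ => min 1 (mn / t - 1 / 2)
    (m' < m → m' * (1 + δ m') / m - 1 < δ m) ∧
    (m < m' → 1 - m' * (1 - δ m') / m < δ m) := by
  intro δ
  have hδm : δ m = mn / m - 1 / 2 := min_eq_right hδlt.le
  have hmnlt : mn < 3 / 2 * m := by
    have : mn / m < 3 / 2 := by linarith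
    calc mn = mn / m * m := by field_simp
    _ < 3 / 2 * m := by nlinarith
  constructor
  · intro hlt
    rcases le_or_gt (mn / m' - 1 / 2) 1 with h | h
    · have hδm' : δ m' = mn / m' - 1 / 2 := min_eq_right h
      rw [hδm, hδm', sub_lt_iff_lt_add, div_lt_iff₀ hm]
      have e1 : m' * (1 + (mn / m' - 1 / 2)) = m' / 2 + mn := by
        field_simp; ring
      have e2 : (mn / m - 1 / 2 + 1) * m = mn + m / 2 := by
        field_simp; ring
      rw [e1, e2]; linarith
    · have hδm' : δ m' = 1 := min_eq_left h.le
      have h3 : 3 / 2 * m' < mn := by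
        have : 3 / 2 < mn / m' := by linarith
        calc 3 / 2 * m' < mn / m' * m' := by nlinarith
        _ = mn := by field_simp
      rw [hδm, hδm', sub_lt_iff_lt_add, div_lt_iff₀ hm]
      have e2 : (mn / m - 1 / 2 + 1) * m = mn + m / 2 := by
        field_simp; ring
      rw [e2]; linarith
  · intro hlt
    have hle : mn / m' - 1 / 2 ≤ 1 := by
      have : mn / m' ≤ mn / m := by
        apply div_le_div_of_nonneg_left hmn.le hm hlt.le
      linarith
    have hδm' : δ m' = mn / m' - 1 / 2 := min_eq_right hle
    rw [hδm, hδm']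
    have e1 : m' * (1 - (mn / m' - 1 / 2)) = 3 * m' / 2 - mn := by
      field_simp; ring
    rw [e1, sub_lt_sub_iff, ← add_div, lt_div_iff₀ hm]
    linarith
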